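/- Let G be a bipartite graph with parts U = {u₁,…,u_m} and V = {v₁,…,v_m}, m ≥ 2, with d(u₁) ≤ … ≤ d(u_m) and d(v₁) ≤ … ≤ d(v_m). Let j be the smallest index with d(u_j) ≤ j+1 and k the smallest index with d(v_k) ≤ k+1 (if such indices exist). If d(u_j) + d(v_k) ≥ m + 2, then G is Hamiltonian bi-connected: for every x ∈ U and y ∈ V there is a Hamiltonian path of G with endpoints x and y. -/

import Mathlib

open SimpleGraph Set

open SimpleGraph List Sum
open scoped Classical

namespace BergeHB

section
variable {W : Type*} {H : SimpleGraph W}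

def IsHamList (H : SimpleGraph W) (a b : W) (L : List W) : Prop :=
  L.Chain' H.Adj ∧ L.head? = some a ∧ L.getLast? = some b ∧ L.Nodup ∧ ∀ v, v ∈ L

lemma exists_walk_of_chain : ∀ (l : List W) (a b : W), List.Chain H.Adj a l →
    (a :: l).getLast (by simp) = b → ∃ p : H.Walk a b, p.support = a :: l := by
  intro l
  induction l with
  | nil => intro a b _ hlast; simp at hlast; subst hlast; exact ⟨Walk.nil, rfl⟩
  | cons c l ih =>
    intro a b hchain hlast
    rw [show List.Chain H.Adj a (c :: l) ↔ _ from List.isChain_cons_cons] at hchain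
    obtain ⟨hadj, hchain⟩ := hchain
    have hlast' : (c :: l).getLast (by simp) = b := by
      rw [← hlast]; exact (List.getLast_cons (by simp)).symm
    obtain ⟨p, hp⟩ := ih c b hchain hlast'
    exact ⟨Walk.cons hadj p, by simp [hp]⟩

lemma walk_of_hamList {a b : W} {L : List W} (hL : IsHamList H a b L) :
    ∃ p : H.Walk a b, p.IsPath ∧ ∀ v : W, v ∈ p.support := by
  obtain ⟨hchain, hhead, hlast, hnd, hcov⟩ := hL
  match L, hhead with
  | a' :: l, hhead =>
    have ha : a' = a := by simpa using hhead
    subst ha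
    have hlast' : (a' :: l).getLast (by simp) = b := by
      have := List.getLast?_eq_getLast (l := a' :: l) (by simp)
      rw [this] at hlast
      exact Option.some_injective _ hlast
    obtain ⟨p, hp⟩ := exists_walk_of_chain l a' b hchain hlast'
    exact ⟨p, by rw [Walk.isPath_def, hp]; exact hnd, fun v => by rw [hp]; exact hcov v⟩
end



variable {α β : Type*}

def interleave : List α → List β → List (α ⊕ β)
  | a :: as, b :: bs => inl a :: inr b :: interleave as bs
  | _, _ => []

lemma interleave_chain' (us : List α) (vs : List β) (h : us.length = vs.length) :
    (interleave us vs).Chain' (completeBipartiteGraph α β).Adj := by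
  induction us generalizing vs with
  | nil =>
    cases vs with
    | nil => simp [interleave, List.Chain']
    | cons y ys => simp at h
  | cons a as ih =>
    cases vs with
    | nil => simp at h
    | cons b bs =>
      simp only [List.length_cons, Nat.succ_inj] at h
      have hI := ih bs h
      rw [interleave]
      cases as with
      | nil =>
        cases bs with
        | nil => simp [interleave, List.Chain']
        | cons b' bs' => simp at h
      | cons a' as' =>
        cases bs with
        | nil => simp at h
        | cons b' bs' =>
          refine List.isChain_cons_cons.2 ⟨by simp, ?_⟩
          rw [interleave] at hI ⊢
          refine List.isChain_cons_cons.2 ⟨by simp, ?_⟩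
          exact hI

lemma mem_interleave_inl (us : List α) (vs : List β) (h : us.length = vs.length) (a : α) :
    inl a ∈ interleave us vs ↔ a ∈ us := by
  induction us generalizing vs with
  | nil =>
    cases vs with
    | nil => simp [interleave]
    | cons y ys => simp at h
  | cons x xs ih =>
    cases vs with
    | nil => simp at h
    | cons y ys =>
      simp only [List.length_cons, Nat.succ_inj] at h
      simp [interleave, ih ys h]

lemma mem_interleave_inr (us : List α) (vs : List β) (h : us.length = vs.length) (b : β) :
    inr b ∈ interleave us vs ↔ b ∈ vs := by
  induction us generalizing vs with
  | nil =>
    cases vs with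
    | nil => simp [interleave]
    | cons y ys => simp at h
  | cons x xs ih =>
    cases vs with
    | nil => simp at h
    | cons y ys =>
      simp only [List.length_cons, Nat.succ_inj] at h
      simp [interleave, ih ys h]

lemma interleave_nodup (us : List α) (vs : List β) (h : us.length = vs.length)
    (hu : us.Nodup) (hv : vs.Nodup) : (interleave us vs).Nodup := by
  induction us generalizing vs with
  | nil =>
    cases vs with
    | nil => simp [interleave]
    | cons y ys => simp at h
  | cons x xs ih =>
    cases vs with
    | nil => simp at h
    | cons y ys =>
      simp only [List.length_cons, Nat.succ_inj] at h
      simp only [List.nodup_cons] at hu hv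
      rw [interleave]
      refine List.nodup_cons.2 ⟨?_, List.nodup_cons.2 ⟨?_, ih ys h hu.2 hv.2⟩⟩
      · simp [mem_interleave_inl xs ys h, hu.1]
      · simp [mem_interleave_inr xs ys h, hv.1]

lemma interleave_head? (x : α) (us : List α) (y : β) (vs : List β) :
    (interleave (x :: us) (y :: vs)).head? = some (inl x) := by
  rw [interleave]; rfl

lemma interleave_getLast? (us : List α) (vs : List β) (h : us.length = vs.length) :
    (interleave us vs).getLast? = vs.getLast?.map inr := by
  induction us generalizing vs with
  | nil =>
    cases vs with
    | nil => simp [interleave]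
    | cons y ys => simp at h
  | cons x xs ih =>
    cases vs with
    | nil => simp at h
    | cons y ys =>
      simp only [List.length_cons, Nat.succ_inj] at h
      cases xs with
      | nil =>
        cases ys with
        | nil => simp [interleave]
        | cons y' ys' => simp at h
      | cons x' xs' =>
        cases ys with
        | nil => simp at h
        | cons y' ys' =>
          have hI := ih (y' :: ys') h
          rw [interleave, interleave]
          rw [interleave] at hI
          simp only [List.getLast?_cons_cons] at hI ⊢
          exact hI



lemma complete_hamList (m : ℕ) (x y : Fin m) :
    ∃ L, IsHamList (completeBipartiteGraph (Fin m) (Fin m)) (inl x) (inr y) L := by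
  have hmpos : 0 < m := x.pos
  set us : List (Fin m) := x :: (List.finRange m).erase x with hus
  set vs : List (Fin m) := ((List.finRange m).erase y) ++ [y] with hvs
  have hndf : (List.finRange m).Nodup := List.nodup_finRange m
  have hlenu : us.length = m := by
    rw [hus, List.length_cons, List.length_erase_of_mem (List.mem_finRange x),
      List.length_finRange]
    omega
  have hlenv : vs.length = m := by
    rw [hvs, List.length_append, List.length_erase_of_mem (List.mem_finRange y),
      List.length_finRange]
    simp; omega
  have hlen : us.length = vs.length := by rw [hlenu, hlenv]
  have hunodup : us.Nodup := by
    rw [hus]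
    exact List.nodup_cons.2 ⟨hndf.not_mem_erase, hndf.erase _⟩
  have hvnodup : vs.Nodup := by
    rw [hvs]
    refine List.Nodup.append (hndf.erase _) (List.nodup_singleton y) ?_
    intro a ha hb
    simp only [List.mem_singleton] at hb
    subst hb
    exact hndf.not_mem_erase ha
  have hucov : ∀ u : Fin m, u ∈ us := by
    intro u
    rcases eq_or_ne u x with rfl | hne
    · exact List.mem_cons_self
    · exact List.mem_cons_of_mem _ (List.mem_erase_of_ne hne |>.2 (List.mem_finRange u))
  have hvcov : ∀ v : Fin m, v ∈ vs := by
    intro v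
    rcases eq_or_ne v y with rfl | hne
    · exact List.mem_append_right _ (List.mem_singleton_self v)
    · exact List.mem_append_left _ (List.mem_erase_of_ne hne |>.2 (List.mem_finRange v))
  refine ⟨interleave us vs, interleave_chain' us vs hlen, ?_, ?_, interleave_nodup us vs hlen hunodup hvnodup, ?_⟩
  · obtain ⟨v0, vs', hvs'⟩ := List.exists_cons_of_ne_nil (l := vs)
      (by intro hnil; rw [hnil] at hlenv; simp at hlenv; omega)
    rw [hus, hvs']
    exact interleave_head? _ _ _ _
  · rw [interleave_getLast? us vs hlen, hvs, List.getLast?_concat]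
    rfl
  · intro v
    cases v with
    | inl u => exact (mem_interleave_inl us vs hlen u).2 (hucov u)
    | inr v => exact (mem_interleave_inr us vs hlen v).2 (hvcov v)



section
variable {W : Type*} {H : SimpleGraph W}

lemma chain'_symm_iff {l : List W} : l.Chain' (flip H.Adj) ↔ l.Chain' H.Adj :=
  ⟨fun h => h.imp fun _ _ hab => hab.symm, fun h => h.imp fun _ _ hab => hab.symm⟩

lemma chain'_reverse_adj {l : List W} (h : l.Chain' H.Adj) : l.reverse.Chain' H.Adj :=
  List.isChain_reverse.2 (chain'_symm_iff.2 h)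

/-- Surgery A : `R ++ c :: ds ++ s :: t :: Q` with `c~s`, `head ds ~ t` becomes
`R ++ c :: s :: ds.reverse ++ t :: Q`. -/
lemma surgA (R ds Q : List W) (c s t d : W) (hd : ds.head? = some d)
    (h1 : List.Chain' H.Adj (R ++ c :: ds ++ [s]))
    (h2 : List.Chain' H.Adj (t :: Q))
    (hcs : H.Adj c s) (hdt : H.Adj d t) :
    List.Chain' H.Adj (R ++ c :: s :: ds.reverse ++ t :: Q) ∧
      (R ++ c :: s :: ds.reverse ++ t :: Q).Perm (R ++ c :: ds ++ s :: t :: Q) := by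
  have hds : ds ≠ [] := by rintro rfl; simp at hd
  have h1' : List.Chain' H.Adj ((R ++ [c]) ++ (ds ++ [s])) := by
    simpa using h1
  obtain ⟨hRc, hdss, hlink⟩ := List.isChain_append.1 h1'
  constructor
  · have goal_eq : R ++ c :: s :: ds.reverse ++ t :: Q
        = (R ++ [c]) ++ ((s :: ds.reverse) ++ (t :: Q)) := by simp
    rw [goal_eq]
    refine List.isChain_append.2 ⟨hRc, ?_, ?_⟩
    · refine List.isChain_append.2 ⟨?_, h2, ?_⟩
      · have : (ds ++ [s]).reverse = s :: ds.reverse := by simp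
        rw [← this]
        exact chain'_reverse_adj hdss
      · intro p hp q hq
        simp only [List.head?_cons, Option.mem_def, Option.some.injEq] at hq
        subst hq
        have : (s :: ds.reverse).getLast? = some d := by
          rw [show s :: ds.reverse = [s] ++ ds.reverse from rfl, List.getLast?_append]
          rw [List.getLast?_reverse, hd]
          rfl
        rw [this] at hp
        simp only [Option.mem_def, Option.some.injEq] at hp
        subst hp
        exact hdt
    · intro p hp q hq
      have hlc : (R ++ [c]).getLast? = some c := by simp
      rw [hlc] at hp
      simp only [Option.mem_def, Option.some.injEq] at hp hq
      subst hp
      rw [show ((s :: ds.reverse) ++ (t :: Q)).head? = some s from rfl] at hq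
      cases hq
      exact hcs
  · have e1 : R ++ c :: s :: ds.reverse ++ t :: Q
        = (R ++ [c]) ++ ((s :: ds.reverse) ++ (t :: Q)) := by simp
    have e2 : R ++ c :: ds ++ s :: t :: Q
        = (R ++ [c]) ++ ((ds ++ [s]) ++ (t :: Q)) := by simp
    rw [e1, e2]
    refine List.Perm.append_left _ (List.Perm.append_right _ ?_)
    calc s :: ds.reverse ~ s :: ds := (ds.reverse_perm).cons s
      _ ~ ds ++ [s] := by
          simpa using (List.perm_append_comm (l₁ := [s]) (l₂ := ds))

/-- Surgery B : `P ++ s :: t :: R ++ c :: d :: S` with `s~c`, `t~d` becomes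
`P ++ s :: c :: R.reverse ++ t :: d :: S`. -/
lemma surgB (P R S : List W) (s t c d : W)
    (h1 : List.Chain' H.Adj (P ++ [s]))
    (h2 : List.Chain' H.Adj (t :: R ++ c :: d :: S))
    (hsc : H.Adj s c) (htd : H.Adj t d) :
    List.Chain' H.Adj (P ++ s :: c :: R.reverse ++ t :: d :: S) ∧
      (P ++ s :: c :: R.reverse ++ t :: d :: S).Perm (P ++ s :: t :: R ++ c :: d :: S) := by
  have h2' : List.Chain' H.Adj ((t :: (R ++ [c])) ++ (d :: S)) := by simpa using h2
  obtain ⟨htRc, hdS, hlink⟩ := List.isChain_append.1 h2'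
  have hRc : List.Chain' H.Adj (R ++ [c]) := htRc.tail
  have hthead : ∀ z ∈ (R ++ [c]).head?, H.Adj t z := (List.isChain_cons.1 htRc).1
  constructor
  · have goal_eq : P ++ s :: c :: R.reverse ++ t :: d :: S
        = (P ++ [s]) ++ ((c :: R.reverse) ++ (t :: d :: S)) := by simp
    rw [goal_eq]
    refine List.isChain_append.2 ⟨h1, ?_, ?_⟩
    · refine List.isChain_append.2 ⟨?_, ?_, ?_⟩
      · have : (R ++ [c]).reverse = c :: R.reverse := by simp
        rw [← this]
        exact chain'_reverse_adj hRc
      · exact List.isChain_cons_cons.2 ⟨htd, hdS⟩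
      · intro p hp q hq
        simp only [List.head?_cons, Option.mem_def, Option.some.injEq] at hq
        subst hq
        have : (c :: R.reverse).getLast? = (R ++ [c]).head? := by
          rw [show c :: R.reverse = (R ++ [c]).reverse by simp, List.getLast?_reverse]
        rw [this] at hp
        exact (hthead p hp).symm
    · intro p hp q hq
      have : (P ++ [s]).getLast? = some s := by simp
      rw [this] at hp
      simp only [Option.mem_def, Option.some.injEq] at hp hq
      subst hp
      rw [show ((c :: R.reverse) ++ (t :: d :: S)).head? = some c from rfl] at hq
      cases hq
      exact hsc
  · have e1 : P ++ s :: c :: R.reverse ++ t :: d :: S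
        = (P ++ [s]) ++ ((c :: R.reverse ++ [t]) ++ (d :: S)) := by simp
    have e2 : P ++ s :: t :: R ++ c :: d :: S
        = (P ++ [s]) ++ ((t :: R ++ [c]) ++ (d :: S)) := by simp
    rw [e1, e2]
    refine List.Perm.append_left _ (List.Perm.append_right _ ?_)
    calc c :: R.reverse ++ [t]
        ~ [t] ++ (c :: R.reverse) := List.perm_append_comm
      _ ~ [t] ++ (c :: R) := ((R.reverse_perm).cons c).append_left [t]
      _ ~ t :: R ++ [c] := by
          have he : t :: R ++ [c] = [t] ++ (R ++ [c]) := by simp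
          rw [he]
          exact List.Perm.append_left [t]
            (by simpa using (List.perm_append_comm (l₁ := [c]) (l₂ := R)))

end



variable {m : ℕ} {H : SimpleGraph (Fin m ⊕ Fin m)}

lemma adj_opp (hbip : H ≤ completeBipartiteGraph (Fin m) (Fin m))
    {u v : Fin m ⊕ Fin m} (h : H.Adj u v) : u.isLeft = !v.isLeft := by
  have := hbip h
  cases u <;> cases v <;> simp_all

lemma sides_card (c : Bool) :
    ((Finset.univ : Finset (Fin m ⊕ Fin m)).filter fun w => w.isLeft = c).card = m := by
  cases c
  · have : ((Finset.univ : Finset (Fin m ⊕ Fin m)).filter fun w => w.isLeft = false)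
        = Finset.univ.map ⟨inr, inr_injective⟩ := by
      ext w; cases w <;> simp
    rw [this, Finset.card_map, Finset.card_univ, Fintype.card_fin]
  · have : ((Finset.univ : Finset (Fin m ⊕ Fin m)).filter fun w => w.isLeft = true)
        = Finset.univ.map ⟨inl, inl_injective⟩ := by
      ext w; cases w <;> simp
    rw [this, Finset.card_map, Finset.card_univ, Fintype.card_fin]

lemma count_lemma (hbip : H ≤ completeBipartiteGraph (Fin m) (Fin m))
    {s t : Fin m ⊕ Fin m} (hst : s.isLeft = !t.isLeft)
    (L : List (Fin m ⊕ Fin m)) (hnd : L.Nodup) (hcov : ∀ v, v ∈ L)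
    (halt : ∀ (i : ℕ) (h : i + 1 < L.length),
        (L.get ⟨i, by omega⟩).isLeft = !(L.get ⟨i+1, h⟩).isLeft)
    (hno : ∀ (i : ℕ) (h : i + 1 < L.length),
        H.Adj t (L.get ⟨i+1, h⟩) → ¬H.Adj s (L.get ⟨i, by omega⟩)) :
    (H.neighborSet s).ncard + (H.neighborSet t).ncard ≤ m + 1 := by
  classical
  set n := L.length with hn
  have hinj : Function.Injective L.get := List.nodup_iff_injective_get.1 hnd
  have hsurj : ∀ w, ∃ i : Fin n, L.get i = w := by
    intro w
    obtain ⟨i, hi⟩ := List.mem_iff_get.1 (hcov w)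
    exact ⟨i, hi⟩
  set Ts := Finset.univ.filter (fun i : Fin n => H.Adj s (L.get i)) with hTs
  set Tt := Finset.univ.filter (fun i : Fin n => H.Adj t (L.get i)) with hTt
  set F := Finset.univ.filter (fun i : Fin n => (L.get i).isLeft = !s.isLeft) with hF
  have hns : (H.neighborSet s).ncard = Ts.card := by
    rw [Set.ncard_eq_toFinset_card']
    refine (Finset.card_bij (fun i _ => L.get i) ?_ ?_ ?_).symm
    · intro i hi
      rw [hTs, Finset.mem_filter] at hi
      simpa using hi.2
    · intro i _ j _ hij; exact hinj hij
    · intro w hw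
      obtain ⟨i, rfl⟩ := hsurj w
      refine ⟨i, ?_, rfl⟩
      rw [hTs, Finset.mem_filter]
      exact ⟨Finset.mem_univ _, by simpa using hw⟩
  have hnt : (H.neighborSet t).ncard = Tt.card := by
    rw [Set.ncard_eq_toFinset_card']
    refine (Finset.card_bij (fun i _ => L.get i) ?_ ?_ ?_).symm
    · intro i hi
      rw [hTt, Finset.mem_filter] at hi
      simpa using hi.2
    · intro i _ j _ hij; exact hinj hij
    · intro w hw
      obtain ⟨i, rfl⟩ := hsurj w
      refine ⟨i, ?_, rfl⟩
      rw [hTt, Finset.mem_filter]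
      exact ⟨Finset.mem_univ _, by simpa using hw⟩
  have hFcard : F.card = m := by
    rw [← sides_card (m := m) (!s.isLeft)]
    refine Finset.card_bij (fun i _ => L.get i) ?_ ?_ ?_
    · intro i hi
      rw [hF, Finset.mem_filter] at hi
      rw [Finset.mem_filter]
      exact ⟨Finset.mem_univ _, hi.2⟩
    · intro i _ j _ hij; exact hinj hij
    · intro w hw
      obtain ⟨i, rfl⟩ := hsurj w
      refine ⟨i, ?_, rfl⟩
      rw [Finset.mem_filter] at hw
      rw [hF, Finset.mem_filter]
      exact ⟨Finset.mem_univ _, hw.2⟩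
  have hTsF : Ts ⊆ F := by
    intro i hi
    rw [hTs, Finset.mem_filter] at hi
    rw [hF, Finset.mem_filter]
    refine ⟨Finset.mem_univ _, ?_⟩
    have := adj_opp hbip hi.2
    rw [this, Bool.not_not]
  set D := Tt.filter (fun i : Fin n => (i : ℕ) ≠ 0) with hD
  have hTtD : Tt.card ≤ D.card + 1 := by
    have h2 : (Tt.filter (fun i : Fin n => ¬((i : ℕ) ≠ 0))).card ≤ 1 := by
      refine Finset.card_le_one.2 ?_
      intro i hi j hj
      simp only [Finset.mem_filter, not_not] at hi hj
      exact Fin.ext (by omega)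
    have h3 := Finset.card_filter_add_card_filter_not
      (s := Tt) (p := fun i : Fin n => (i : ℕ) ≠ 0)
    have h4 : D.card = (Tt.filter (fun i : Fin n => (i : ℕ) ≠ 0)).card := by rw [hD]
    omega
  have hmap : ∀ i ∈ D, (⟨(i : ℕ) - 1, by omega⟩ : Fin n) ∈ F \ Ts := by
    intro i hi
    rw [hD, Finset.mem_filter, hTt, Finset.mem_filter] at hi
    obtain ⟨⟨_, hadj⟩, hi0⟩ := hi
    have hi1 : 1 ≤ (i : ℕ) := by omega
    have hilt : (i : ℕ) < n := i.2
    have hieq : (⟨(i : ℕ) - 1 + 1, by omega⟩ : Fin n) = i :=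
      Fin.ext (show (i : ℕ) - 1 + 1 = (i : ℕ) by omega)
    have hgeq : L.get (⟨(i : ℕ) - 1 + 1, by omega⟩ : Fin n) = L.get i := by rw [hieq]
    have halt' := halt ((i : ℕ) - 1) (by omega)
    rw [hgeq] at halt'
    have hno' := hno ((i : ℕ) - 1) (by omega)
    rw [hgeq] at hno'
    have hit : (L.get i).isLeft = !t.isLeft := by
      have := adj_opp hbip hadj
      rw [this, Bool.not_not]
    rw [Finset.mem_sdiff, hF, Finset.mem_filter, hTs, Finset.mem_filter]
    refine ⟨⟨Finset.mem_univ _, ?_⟩, ?_⟩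
    · rw [halt', hit, hst, Bool.not_not]
    · intro hmem
      exact (hno' hadj) hmem.2
  have hDcard : D.card ≤ (F \ Ts).card := by
    refine Finset.card_le_card_of_injOn (fun i => ⟨(i : ℕ) - 1, by omega⟩) hmap ?_
    intro i hi j hj hij
    rw [hD, Finset.coe_filter] at hi hj
    simp only [Set.mem_setOf_eq] at hi hj
    have hv : (i : ℕ) - 1 = (j : ℕ) - 1 := congrArg Fin.val hij
    exact Fin.ext (by omega)
  have hsdiff : (F \ Ts).card = F.card - Ts.card := Finset.card_sdiff_of_subset hTsF
  have hTsle : Ts.card ≤ F.card := Finset.card_le_card hTsF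
  rw [hns, hnt]
  omega



lemma head?_append_cons {α : Type*} (R Z Z' : List α) (c : α) :
    (R ++ c :: Z).head? = (R ++ c :: Z').head? := by cases R <;> rfl

lemma rotation_core {m : ℕ} {H G' : SimpleGraph (Fin m ⊕ Fin m)}
    (hbip : H ≤ completeBipartiteGraph (Fin m) (Fin m))
    (hbip' : G' ≤ completeBipartiteGraph (Fin m) (Fin m))
    {s t : Fin m ⊕ Fin m} (hst : s.isLeft = !t.isLeft)
    (hnadj : ¬H.Adj s t)
    (hdeg : m + 2 ≤ (H.neighborSet s).ncard + (H.neighborSet t).ncard)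
    {a b : Fin m ⊕ Fin m} {L : List (Fin m ⊕ Fin m)}
    (hchain : L.Chain' G'.Adj) (hhead : L.head? = some a) (hlast : L.getLast? = some b)
    (hnd : L.Nodup) (hcov : ∀ v, v ∈ L)
    {q : ℕ} (hq1 : q + 1 < L.length)
    (hqs : L.get ⟨q, by omega⟩ = s) (hqt : L.get ⟨q+1, hq1⟩ = t)
    (hGH : ∀ (i : ℕ) (h : i + 1 < L.length), i ≠ q →
        H.Adj (L.get ⟨i, by omega⟩) (L.get ⟨i+1, h⟩)) :
    ∃ L', IsHamList H a b L' := by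
  classical
  set n := L.length with hn
  have hinj : Function.Injective L.get := List.nodup_iff_injective_get.1 hnd
  have hnadj' : ¬H.Adj t s := fun h => hnadj h.symm
  -- the H-chains on the two sides
  have hP : (L.take (q+1)).Chain' H.Adj := by
    refine List.isChain_iff_getElem.2 ?_
    intro i hi
    simp only [List.length_take] at hi
    have hiq : i + 1 < q + 1 := by omega
    have hin : i + 1 < n := by omega
    have e1 : (L.take (q+1)).get ⟨i, by simp [List.length_take]; omega⟩
        = L.get ⟨i, by omega⟩ := by
      simp [List.get_eq_getElem, List.getElem_take]
    have e2 : (L.take (q+1)).get ⟨i+1, by simp [List.length_take]; omega⟩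
        = L.get ⟨i+1, hin⟩ := by
      simp [List.get_eq_getElem, List.getElem_take]
    rw [List.get_eq_getElem, List.get_eq_getElem] at e1 e2
    simp only [List.getElem_take]
    exact hGH i hin (by omega)
  have hQ : (L.drop (q+1)).Chain' H.Adj := by
    refine List.isChain_iff_getElem.2 ?_
    intro i hi
    simp only [List.length_drop] at hi
    have hin : (q+1+i) + 1 < n := by omega
    simp only [List.getElem_drop]
    have := hGH (q+1+i) hin (by omega)
    rw [List.get_eq_getElem, List.get_eq_getElem] at this
    convert this using 2 <;> simp <;> omega
  by_cases hrot : ∃ (i : ℕ) (h : i + 1 < n), H.Adj s (L.get ⟨i, by omega⟩)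
      ∧ H.Adj t (L.get ⟨i+1, h⟩)
  · -- rotation exists : surgery
    obtain ⟨i, hin, hsu, htw⟩ := hrot
    set u := L.get ⟨i, by omega⟩ with hu
    set w := L.get ⟨i+1, hin⟩ with hw
    have hus : u ≠ s := fun h => by rw [h] at hsu; exact H.irrefl hsu
    have hut : u ≠ t := fun h => by rw [h] at hsu; exact hnadj hsu
    have hws : w ≠ s := fun h => by rw [h] at htw; exact hnadj' htw
    have hwt : w ≠ t := fun h => by rw [h] at htw; exact H.irrefl htw
    have hiq : i ≠ q := fun h => hus (by rw [hu, ← hqs]; congr 1; exact Fin.ext h)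
    have hiq1 : i ≠ q + 1 := fun h => hut (by rw [hu, ← hqt]; congr 1; exact Fin.ext h)
    have hi1q : i + 1 ≠ q := fun h => hws (by rw [hw, ← hqs]; congr 1; exact Fin.ext h)
    have hi1q1 : i + 1 ≠ q + 1 := fun h => hwt (by rw [hw, ← hqt]; congr 1; exact Fin.ext h)
    have hsplit : i + 1 < q ∨ q + 2 ≤ i := by omega
    -- getElem versions
    have hqsE : L[q]'(by omega) = s := by rw [← hqs]; rfl
    have hqtE : L[q+1]'(hq1) = t := by rw [← hqt]; rfl
    have huE : L[i]'(by omega) = u := by rw [hu]; rfl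
    have hwE : L[i+1]'(hin) = w := by rw [hw]; rfl
    rcases hsplit with hA | hB
    · -- Surgery A
      set R := L.take i with hR
      set ds : List (Fin m ⊕ Fin m) := w :: (L.drop (i+2)).take (q - (i+2)) with hds
      set Q' := L.drop (q+2) with hQ'
      have hfull : L = R ++ u :: (ds ++ s :: t :: Q') := by
        conv_lhs => rw [← List.take_append_drop i L]
        congr 1
        rw [List.drop_eq_getElem_cons (by omega : i < L.length), huE]
        congr 1
        rw [List.drop_eq_getElem_cons (by omega : i + 1 < L.length), hwE]
        rw [hds, List.cons_append]
        congr 1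
        conv_lhs => rw [← List.take_append_drop (q - (i+2)) (L.drop (i+2))]
        congr 1
        rw [List.drop_drop]
        have hq2 : i + 2 + (q - (i+2)) = q := by omega
        rw [hq2]
        rw [List.drop_eq_getElem_cons (by omega : q < L.length), hqsE]
        congr 1
        rw [List.drop_eq_getElem_cons (by omega : q + 1 < L.length), hqtE]
      have hiq2 : i + 2 ≤ q := by omega
      have hqLen : q + 2 ≤ L.length := by omega
      have hRlen : R.length = i := by rw [hR, List.length_take]; omega
      have hdslen : ds.length = q - (i + 1) := by
        rw [hds, List.length_cons, List.length_take, List.length_drop]; omega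
      have hlen : (R ++ u :: ds ++ [s]).length = q + 1 := by
        simp only [List.length_append, List.length_cons, List.length_nil, hRlen, hdslen]
        omega
      have hXeq : L.take (q+1) = R ++ u :: ds ++ [s] := by
        conv_lhs => rw [hfull]
        have : R ++ u :: (ds ++ s :: t :: Q') = (R ++ u :: ds ++ [s]) ++ (t :: Q') := by
          simp
        rw [this]
        exact List.take_left' hlen
      have hYeq : L.drop (q+1) = t :: Q' := by
        rw [List.drop_eq_getElem_cons (by omega : q + 1 < L.length), hqtE]
      have h1 : List.Chain' H.Adj (R ++ u :: ds ++ [s]) := hXeq ▸ hP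
      have h2 : List.Chain' H.Adj (t :: Q') := hYeq ▸ hQ
      obtain ⟨hchain', hperm⟩ := surgA R ds Q' u s t w rfl h1 h2 hsu.symm htw.symm
      have hpermL : (R ++ u :: s :: ds.reverse ++ t :: Q').Perm L := by
        refine hperm.trans ?_
        rw [hfull]
        have : R ++ u :: (ds ++ s :: t :: Q') = R ++ u :: ds ++ s :: t :: Q' := by simp
        rw [this]
      refine ⟨R ++ u :: s :: ds.reverse ++ t :: Q', hchain', ?_, ?_, ?_, ?_⟩
      · rw [← hhead]
        conv_rhs => rw [hfull]
        have e1 : R ++ u :: s :: ds.reverse ++ t :: Q'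
            = R ++ u :: (s :: ds.reverse ++ t :: Q') := by simp
        rw [e1]
        exact head?_append_cons _ _ _ _
      · rw [← hlast]
        conv_rhs => rw [hfull]
        have e1 : R ++ u :: s :: ds.reverse ++ t :: Q'
            = (R ++ u :: s :: ds.reverse) ++ t :: Q' := by simp
        have e2 : R ++ u :: (ds ++ s :: t :: Q') = (R ++ u :: ds ++ [s]) ++ t :: Q' := by simp
        rw [e1, e2, List.getLast?_append_cons, List.getLast?_append_cons]
      · exact hpermL.nodup_iff.2 hnd
      · intro v; exact hpermL.mem_iff.2 (hcov v)
    · -- Surgery B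
      set P' := L.take q with hP'
      set R' := (L.drop (q+2)).take (i - (q+2)) with hR'
      set S := L.drop (i+2) with hS
      have hfull : L = P' ++ s :: t :: (R' ++ u :: w :: S) := by
        conv_lhs => rw [← List.take_append_drop q L]
        congr 1
        rw [List.drop_eq_getElem_cons (by omega : q < L.length), hqsE]
        congr 1
        rw [List.drop_eq_getElem_cons (by omega : q + 1 < L.length), hqtE]
        congr 1
        conv_lhs => rw [← List.take_append_drop (i - (q+2)) (L.drop (q+2))]
        congr 1
        rw [List.drop_drop]
        have hq2 : q + 2 + (i - (q+2)) = i := by omega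
        rw [hq2]
        rw [List.drop_eq_getElem_cons (by omega : i < L.length), huE]
        congr 1
        rw [List.drop_eq_getElem_cons (by omega : i + 1 < L.length), hwE]
      have hqi2 : q + 2 ≤ i := hB
      have hiLen : i + 2 ≤ L.length := by omega
      have hP'len : P'.length = q := by rw [hP', List.length_take]; omega
      have hlen : (P' ++ [s]).length = q + 1 := by
        simp only [List.length_append, List.length_cons, List.length_nil, hP'len]
      have hXeq : L.take (q+1) = P' ++ [s] := by
        conv_lhs => rw [hfull]
        have : P' ++ s :: t :: (R' ++ u :: w :: S)
            = (P' ++ [s]) ++ (t :: (R' ++ u :: w :: S)) := by simp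
        rw [this]
        exact List.take_left' hlen
      have hYeq : L.drop (q+1) = t :: (R' ++ u :: w :: S) := by
        conv_lhs => rw [hfull]
        have : P' ++ s :: t :: (R' ++ u :: w :: S)
            = (P' ++ [s]) ++ (t :: (R' ++ u :: w :: S)) := by simp
        rw [this]
        exact List.drop_left' hlen
      have h1 : List.Chain' H.Adj (P' ++ [s]) := hXeq ▸ hP
      have h2 : List.Chain' H.Adj (t :: R' ++ u :: w :: S) := by
        have := hYeq ▸ hQ
        simpa using this
      obtain ⟨hchain', hperm⟩ := surgB P' R' S s t u w h1 h2 hsu htw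
      have hpermL : (P' ++ s :: u :: R'.reverse ++ t :: w :: S).Perm L := by
        refine hperm.trans ?_
        rw [hfull]
        have : P' ++ s :: t :: R' ++ u :: w :: S = P' ++ s :: t :: (R' ++ u :: w :: S) := by
          simp
        rw [this]
      refine ⟨P' ++ s :: u :: R'.reverse ++ t :: w :: S, hchain', ?_, ?_, ?_, ?_⟩
      · rw [← hhead]
        conv_rhs => rw [hfull]
        have e1 : P' ++ s :: u :: R'.reverse ++ t :: w :: S
            = P' ++ s :: (u :: R'.reverse ++ t :: w :: S) := by simp
        rw [e1]
        exact head?_append_cons _ _ _ _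
      · rw [← hlast]
        conv_rhs => rw [hfull]
        have e1 : P' ++ s :: u :: R'.reverse ++ t :: w :: S
            = (P' ++ s :: u :: R'.reverse ++ [t]) ++ w :: S := by simp
        have e2 : P' ++ s :: t :: (R' ++ u :: w :: S)
            = (P' ++ s :: t :: R' ++ [u]) ++ w :: S := by simp
        rw [e1, e2, List.getLast?_append_cons, List.getLast?_append_cons]
      · exact hpermL.nodup_iff.2 hnd
      · intro v; exact hpermL.mem_iff.2 (hcov v)
  · -- no rotation : contradiction with the degree sum
    exfalso
    push_neg at hrot
    have hcount := count_lemma hbip hst L hnd hcov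
      (fun i h => adj_opp hbip' (List.isChain_iff_getElem.1 hchain i (by omega)))
      (fun i h hadt hads => hrot i h hads hadt)
    omega



lemma rotationHB {m : ℕ} {H : SimpleGraph (Fin m ⊕ Fin m)}
    (hbip : H ≤ completeBipartiteGraph (Fin m) (Fin m))
    {x y : Fin m} (hxy : ¬H.Adj (inl x) (inr y))
    (hdeg : m + 2 ≤ (H.neighborSet (inl x)).ncard + (H.neighborSet (inr y)).ncard)
    {a b : Fin m ⊕ Fin m} {L : List (Fin m ⊕ Fin m)}
    (hL : IsHamList (H ⊔ SimpleGraph.edge (inl x) (inr y)) a b L) :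
    ∃ L', IsHamList H a b L' := by
  classical
  obtain ⟨hchain, hhead, hlast, hnd, hcov⟩ := hL
  by_cases hch : L.Chain' H.Adj
  · exact ⟨L, hch, hhead, hlast, hnd, hcov⟩
  have hbip' : H ⊔ SimpleGraph.edge (inl x) (inr y)
      ≤ completeBipartiteGraph (Fin m) (Fin m) := by
    refine sup_le hbip ?_
    intro u v huv
    rw [SimpleGraph.edge_adj] at huv
    rcases huv.1 with ⟨rfl, rfl⟩ | ⟨rfl, rfl⟩ <;> simp
  have hinj : Function.Injective L.get := List.nodup_iff_injective_get.1 hnd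
  rw [show List.Chain' H.Adj L ↔ _ from List.isChain_iff_getElem] at hch
  push_neg at hch
  obtain ⟨q, hq, hnadjq⟩ := hch
  have hq1 : q + 1 < L.length := by omega
  have hadj := List.isChain_iff_getElem.1 hchain q hq
  have hedge : (L.get ⟨q, by omega⟩ = inl x ∧ L.get ⟨q+1, hq1⟩ = inr y)
      ∨ (L.get ⟨q, by omega⟩ = inr y ∧ L.get ⟨q+1, hq1⟩ = inl x) := by
    rcases hadj with h | h
    · exact absurd h hnadjq
    · rw [SimpleGraph.edge_adj] at h
      rcases h.1 with ⟨h1, h2⟩ | ⟨h1, h2⟩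
      · exact Or.inl ⟨h1, h2⟩
      · exact Or.inr ⟨h1, h2⟩
  -- common "other pairs are H-edges" fact
  have hGH : ∀ (i : ℕ) (h : i + 1 < L.length), i ≠ q →
      H.Adj (L.get ⟨i, by omega⟩) (L.get ⟨i+1, h⟩) := by
    intro i h hiq
    have hadji := List.isChain_iff_getElem.1 hchain i (by omega)
    rcases hadji with h' | h'
    · exact h'
    · exfalso
      rw [SimpleGraph.edge_adj] at h'
      have hposx : ∀ (l : ℕ) (hl : l < L.length), L.get ⟨l, hl⟩ = inl x →
          ∀ (l' : ℕ) (hl' : l' < L.length), L.get ⟨l', hl'⟩ = inl x → l = l' := by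
        intro l hl he l' hl' he'
        have := hinj (a₁ := ⟨l, hl⟩) (a₂ := ⟨l', hl'⟩) (by rw [he, he'])
        exact congrArg Fin.val this
      have hposy : ∀ (l : ℕ) (hl : l < L.length), L.get ⟨l, hl⟩ = inr y →
          ∀ (l' : ℕ) (hl' : l' < L.length), L.get ⟨l', hl'⟩ = inr y → l = l' := by
        intro l hl he l' hl' he'
        have := hinj (a₁ := ⟨l, hl⟩) (a₂ := ⟨l', hl'⟩) (by rw [he, he'])
        exact congrArg Fin.val this
      rcases hedge with ⟨hs, ht⟩ | ⟨hs, ht⟩ <;>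
        rcases h'.1 with ⟨h1, h2⟩ | ⟨h1, h2⟩
      · exact hiq (hposx i (by omega) h1 q (by omega) hs)
      · have e1 : i = q + 1 := hposy i (by omega) h1 (q+1) hq1 ht
        have e2 : i + 1 = q := hposx (i+1) h h2 q (by omega) hs
        omega
      · have e1 : i = q + 1 := hposx i (by omega) h1 (q+1) hq1 ht
        have e2 : i + 1 = q := hposy (i+1) h h2 q (by omega) hs
        omega
      · exact hiq (hposy i (by omega) h1 q (by omega) hs)
  rcases hedge with ⟨hs, ht⟩ | ⟨hs, ht⟩
  · exact rotation_core hbip hbip' (by simp) hxy hdeg hchain hhead hlast hnd hcov hq1 hs ht hGH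
  · refine rotation_core hbip hbip' (by simp) (fun h => hxy h.symm) (by omega) hchain hhead
      hlast hnd hcov hq1 hs ht hGH



-- degree of a left vertex counts right neighbours
lemma deg_left {m : ℕ} {H : SimpleGraph (Fin m ⊕ Fin m)}
    (hbip : H ≤ completeBipartiteGraph (Fin m) (Fin m)) (u : Fin m) :
    (H.neighborSet (inl u)).ncard
      = (Finset.univ.filter fun v : Fin m => H.Adj (inl u) (inr v)).card := by
  classical
  rw [Set.ncard_eq_toFinset_card']
  refine (Finset.card_bij (fun v _ => inr v) ?_ ?_ ?_).symm
  · intro v hv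
    simp only [Finset.mem_filter] at hv
    simp only [Set.mem_toFinset, SimpleGraph.mem_neighborSet]
    exact hv.2
  · intro v _ v' _ h; exact inr_injective h
  · intro w hw
    simp only [Set.mem_toFinset, SimpleGraph.mem_neighborSet] at hw
    cases w with
    | inl w => exact absurd (hbip hw) (by simp)
    | inr w => exact ⟨w, by simp [hw], rfl⟩

lemma deg_right {m : ℕ} {H : SimpleGraph (Fin m ⊕ Fin m)}
    (hbip : H ≤ completeBipartiteGraph (Fin m) (Fin m)) (v : Fin m) :
    (H.neighborSet (inr v)).ncard
      = (Finset.univ.filter fun u : Fin m => H.Adj (inl u) (inr v)).card := by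
  classical
  rw [Set.ncard_eq_toFinset_card']
  refine (Finset.card_bij (fun u _ => inl u) ?_ ?_ ?_).symm
  · intro u hu
    simp only [Finset.mem_filter] at hu
    simp only [Set.mem_toFinset, SimpleGraph.mem_neighborSet]
    exact hu.2.symm
  · intro u _ u' _ h; exact inl_injective h
  · intro w hw
    simp only [Set.mem_toFinset, SimpleGraph.mem_neighborSet] at hw
    cases w with
    | inl w => exact ⟨w, by simp [hw.symm], rfl⟩
    | inr w => exact absurd (hbip hw) (by simp)

lemma filter_lt_card {m kk : ℕ} :
    ((Finset.univ : Finset (Fin m)).filter fun i : Fin m => (i : ℕ) < kk).card ≤ kk := by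
  classical
  calc ((Finset.univ : Finset (Fin m)).filter fun i : Fin m => (i : ℕ) < kk).card
      ≤ (Finset.range kk).card := by
        refine Finset.card_le_card_of_injOn (fun i => (i : ℕ)) ?_ ?_
        · intro i hi
          simp only [Finset.coe_filter, Finset.mem_coe, Finset.mem_filter, Set.mem_setOf_eq] at hi
          simp [hi.2]
        · intro i _ j _ h; exact Fin.ext h
    _ = kk := Finset.card_range kk

lemma exists_ge_of_card {m kk : ℕ} (S : Finset (Fin m)) (hcard : kk ≤ S.card)
    (hk : 1 ≤ kk) : ∃ i ∈ S, kk ≤ (i : ℕ) + 1 := by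
  classical
  by_contra hcon
  push_neg at hcon
  have hsub : S ⊆ (Finset.univ : Finset (Fin m)).filter fun i : Fin m => (i : ℕ) < kk - 1 := by
    intro i hi
    simp only [Finset.mem_filter]
    exact ⟨Finset.mem_univ _, by have := hcon i hi; omega⟩
  have := (Finset.card_le_card hsub).trans filter_lt_card
  omega

lemma hamList_of_all {m : ℕ} {H : SimpleGraph (Fin m ⊕ Fin m)}
    (hall : ∀ u v : Fin m, H.Adj (inl u) (inr v)) (x y : Fin m) :
    ∃ L, IsHamList H (inl x) (inr y) L := by
  obtain ⟨L, h1, h2, h3, h4, h5⟩ := complete_hamList m x y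
  refine ⟨L, h1.imp ?_, h2, h3, h4, h5⟩
  intro p q hpq
  match p, q with
  | inl p, inr q => exact hall p q
  | inr p, inl q => exact (hall q p).symm
  | inl p, inl q => exact absurd hpq (by simp)
  | inr p, inr q => exact absurd hpq (by simp)

theorem closureHB (m : ℕ)
    (G : SimpleGraph (Fin m ⊕ Fin m))
    (hbip : G ≤ completeBipartiteGraph (Fin m) (Fin m))
    (hU : Monotone fun i : Fin m => (G.neighborSet (Sum.inl i)).ncard)
    (hV : Monotone fun i : Fin m => (G.neighborSet (Sum.inr i)).ncard)
    (j k : Fin m)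
    (hjmin : ∀ j' : Fin m, j' < j → (j' : ℕ) + 2 < (G.neighborSet (Sum.inl j')).ncard)
    (hkmin : ∀ k' : Fin m, k' < k → (k' : ℕ) + 2 < (G.neighborSet (Sum.inr k')).ncard)
    (hsum : m + 2 ≤ (G.neighborSet (Sum.inl j)).ncard + (G.neighborSet (Sum.inr k)).ncard) :
    ∀ (c : ℕ) (H : SimpleGraph (Fin m ⊕ Fin m)), G ≤ H →
      H ≤ completeBipartiteGraph (Fin m) (Fin m) →
      {p : Fin m × Fin m | ¬H.Adj (inl p.1) (inr p.2)}.ncard ≤ c →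
      ∀ x y : Fin m, ∃ L, IsHamList H (inl x) (inr y) L := by
  classical
  intro c
  induction c with
  | zero =>
    intro H hGH hbip' hc x y
    refine hamList_of_all (fun u v => ?_) x y
    by_contra hne
    have hmem : (⟨u, v⟩ : Fin m × Fin m)
        ∈ {p : Fin m × Fin m | ¬H.Adj (inl p.1) (inr p.2)} := hne
    have := (Set.ncard_pos (Set.toFinite _)).2 ⟨_, hmem⟩
    omega
  | succ c ih =>
    intro H hGH hbip' hc x y
    by_cases hall : ∀ u v : Fin m, H.Adj (inl u) (inr v)
    · exact hamList_of_all hall x y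
    push_neg at hall
    set NE := {p : Fin m × Fin m | ¬H.Adj (inl p.1) (inr p.2)} with hNE
    set Fset := (Set.toFinite NE).toFinset with hFset
    have hNEne : Fset.Nonempty := by
      obtain ⟨u, v, huv⟩ := hall
      exact ⟨⟨u, v⟩, by simp [hFset, hNE]; exact huv⟩
    obtain ⟨p₀, hp₀mem, hp₀max⟩ := Fset.exists_max_image
      (fun p => (H.neighborSet (inl p.1)).ncard + (H.neighborSet (inr p.2)).ncard) hNEne
    obtain ⟨u₀, v₀⟩ := p₀
    have hp₀ : ¬H.Adj (inl u₀) (inr v₀) := by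
      have := hp₀mem
      rw [hFset, Set.Finite.mem_toFinset] at this
      exact this
    set r := (H.neighborSet (inl u₀)).ncard with hr
    set t := (H.neighborSet (inr v₀)).ncard with ht
    -- key degree condition via the Chvátal-type argument
    have hdeg : m + 2 ≤ r + t := by
      by_contra hlt
      push_neg at hlt
      have hlt' : r + t ≤ m + 1 := by omega
      -- U side
      have hUside : (G.neighborSet (inl j)).ncard ≤ r := by
        have htcard : t = (Finset.univ.filter fun u : Fin m => H.Adj (inl u) (inr v₀)).card :=
          deg_right hbip' v₀
        have hsplit := Finset.card_filter_add_card_filter_not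
          (s := (Finset.univ : Finset (Fin m)))
          (p := fun u : Fin m => H.Adj (inl u) (inr v₀))
        have hcardU : (Finset.univ.filter fun u : Fin m => ¬H.Adj (inl u) (inr v₀)).card
            = m - t := by
          simp only [Finset.card_univ, Fintype.card_fin] at hsplit
          omega
        have hu₀mem : u₀ ∈ Finset.univ.filter fun u : Fin m => ¬H.Adj (inl u) (inr v₀) := by
          simp [hp₀]
        have htm : t + 1 ≤ m := by
          have := Finset.card_pos.2 ⟨_, hu₀mem⟩
          simp only [Finset.card_univ, Fintype.card_fin] at hsplit
          omega
        have hsub : (Finset.univ.filter fun u : Fin m => ¬H.Adj (inl u) (inr v₀))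
            ⊆ Finset.univ.filter fun i : Fin m => (G.neighborSet (inl i)).ncard ≤ r := by
          intro u hu
          simp only [Finset.mem_filter] at hu ⊢
          refine ⟨Finset.mem_univ _, ?_⟩
          have h1 : (G.neighborSet (inl u)).ncard ≤ (H.neighborSet (inl u)).ncard :=
            Set.ncard_le_ncard (fun w hw => hGH hw) (Set.toFinite _)
          have h2 := hp₀max ⟨u, v₀⟩ (by rw [hFset, Set.Finite.mem_toFinset]; exact hu.2)
          simp only at h2
          omega
        have hScard : m - t
            ≤ (Finset.univ.filter fun i : Fin m => (G.neighborSet (inl i)).ncard ≤ r).card := by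
          rw [← hcardU]
          exact Finset.card_le_card hsub
        obtain ⟨i, hiS, hige⟩ := exists_ge_of_card _ hScard (by omega)
        simp only [Finset.mem_filter] at hiS
        have hdi : (G.neighborSet (inl i)).ncard ≤ (i : ℕ) + 2 := by omega
        have hji : j ≤ i := by
          by_contra hcon
          push_neg at hcon
          exact absurd hdi (by have := hjmin i hcon; omega)
        exact le_trans (hU hji) hiS.2
      -- V side
      have hVside : (G.neighborSet (inr k)).ncard ≤ t := by
        have hrcard : r = (Finset.univ.filter fun v : Fin m => H.Adj (inl u₀) (inr v)).card :=
          deg_left hbip' u₀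
        have hsplit := Finset.card_filter_add_card_filter_not
          (s := (Finset.univ : Finset (Fin m)))
          (p := fun v : Fin m => H.Adj (inl u₀) (inr v))
        have hcardV : (Finset.univ.filter fun v : Fin m => ¬H.Adj (inl u₀) (inr v)).card
            = m - r := by
          simp only [Finset.card_univ, Fintype.card_fin] at hsplit
          omega
        have hv₀mem : v₀ ∈ Finset.univ.filter fun v : Fin m => ¬H.Adj (inl u₀) (inr v) := by
          simp [hp₀]
        have hrm : r + 1 ≤ m := by
          have := Finset.card_pos.2 ⟨_, hv₀mem⟩
          simp only [Finset.card_univ, Fintype.card_fin] at hsplit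
          omega
        have hsub : (Finset.univ.filter fun v : Fin m => ¬H.Adj (inl u₀) (inr v))
            ⊆ Finset.univ.filter fun i : Fin m => (G.neighborSet (inr i)).ncard ≤ t := by
          intro v hv
          simp only [Finset.mem_filter] at hv ⊢
          refine ⟨Finset.mem_univ _, ?_⟩
          have h1 : (G.neighborSet (inr v)).ncard ≤ (H.neighborSet (inr v)).ncard :=
            Set.ncard_le_ncard (fun w hw => hGH hw) (Set.toFinite _)
          have h2 := hp₀max ⟨u₀, v⟩ (by rw [hFset, Set.Finite.mem_toFinset]; exact hv.2)
          simp only at h2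
          omega
        have hScard : m - r
            ≤ (Finset.univ.filter fun i : Fin m => (G.neighborSet (inr i)).ncard ≤ t).card := by
          rw [← hcardV]
          exact Finset.card_le_card hsub
        obtain ⟨i, hiS, hige⟩ := exists_ge_of_card _ hScard (by omega)
        simp only [Finset.mem_filter] at hiS
        have hdi : (G.neighborSet (inr i)).ncard ≤ (i : ℕ) + 2 := by omega
        have hki : k ≤ i := by
          by_contra hcon
          push_neg at hcon
          exact absurd hdi (by have := hkmin i hcon; omega)
        exact le_trans (hV hki) hiS.2
      omega
    -- add the edge and recurse
    set H' := H ⊔ SimpleGraph.edge (inl u₀) (inr v₀) with hH'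
    have hH'adj : H'.Adj (inl u₀) (inr v₀) := by
      rw [hH', SimpleGraph.sup_adj, SimpleGraph.edge_adj]
      exact Or.inr ⟨Or.inl ⟨rfl, rfl⟩, by simp⟩
    have hH'bip : H' ≤ completeBipartiteGraph (Fin m) (Fin m) := by
      rw [hH']
      refine sup_le hbip' ?_
      intro p q hpq
      rw [SimpleGraph.edge_adj] at hpq
      rcases hpq.1 with ⟨rfl, rfl⟩ | ⟨rfl, rfl⟩ <;> simp
    have hNE' : {p : Fin m × Fin m | ¬H'.Adj (inl p.1) (inr p.2)}.ncard ≤ c := by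
      have hssub : {p : Fin m × Fin m | ¬H'.Adj (inl p.1) (inr p.2)} ⊂ NE := by
        constructor
        · intro p hp
          refine fun hadj => hp ?_
          rw [hH'] ; exact (le_sup_left : H ≤ H ⊔ SimpleGraph.edge (inl u₀) (inr v₀)) hadj
        · intro hcon
          have hp₀NE : (⟨u₀, v₀⟩ : Fin m × Fin m) ∈ NE := hp₀
          have := hcon hp₀NE
          exact this hH'adj
      have := Set.ncard_lt_ncard hssub (Set.toFinite NE)
      omega
    obtain ⟨L, hL⟩ := ih H' (le_trans hGH le_sup_left) hH'bip hNE' x y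
    exact rotationHB hbip' hp₀ hdeg ((hH' ▸ hL) : IsHamList (H ⊔ _) _ _ L)



end BergeHB

/-- Berge's criterion for Hamiltonian bi-connectedness of a balanced bipartite
graph.  Vertices of each part are indexed by `Fin m` in nondecreasing order of
degree (so the paper's 1-indexed `u_j` corresponds to index `j - 1`, and the
condition `d(u_j) ≤ j + 1` becomes `d ≤ (j : ℕ) + 2`).  If `j` and `k` are the
smallest indices with `d(u_j) ≤ j + 1` and `d(v_k) ≤ k + 1` respectively, and
`d(u_j) + d(v_k) ≥ m + 2`, then for every `x ∈ U` and `y ∈ V` there is a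
Hamiltonian path with endpoints `x` and `y`. -/
theorem berge_hamiltonian_biconnected (m : ℕ) (hm : 2 ≤ m)
    (G : SimpleGraph (Fin m ⊕ Fin m))
    (hbip : G ≤ completeBipartiteGraph (Fin m) (Fin m))
    (hU : Monotone fun i : Fin m => (G.neighborSet (Sum.inl i)).ncard)
    (hV : Monotone fun i : Fin m => (G.neighborSet (Sum.inr i)).ncard)
    (j k : Fin m)
    (hj : (G.neighborSet (Sum.inl j)).ncard ≤ (j : ℕ) + 2)
    (hjmin : ∀ j' : Fin m, j' < j → (j' : ℕ) + 2 < (G.neighborSet (Sum.inl j')).ncard)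
    (hk : (G.neighborSet (Sum.inr k)).ncard ≤ (k : ℕ) + 2)
    (hkmin : ∀ k' : Fin m, k' < k → (k' : ℕ) + 2 < (G.neighborSet (Sum.inr k')).ncard)
    (hsum : m + 2 ≤ (G.neighborSet (Sum.inl j)).ncard + (G.neighborSet (Sum.inr k)).ncard) :
    ∀ (x y : Fin m), ∃ p : G.Walk (Sum.inl x) (Sum.inr y),
      p.IsPath ∧ ∀ v : Fin m ⊕ Fin m, v ∈ p.support := by
  intro x y
  obtain ⟨L, hL⟩ := BergeHB.closureHB m G hbip hU hV j k hjmin hkmin hsum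
    ({p : Fin m × Fin m | ¬G.Adj (Sum.inl p.1) (Sum.inr p.2)}.ncard) G le_rfl hbip le_rfl x y
  exact BergeHB.walk_of_hamList hL
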